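/- The fourth central moment μ₄ of the Pólya urn distribution with parameters n, a = x, b = 1−x, c = −min{x,1−x}/(n−1) satisfies μ₄ = O(n²) as n → ∞, uniformly in x ∈ [0,1]; i.e., there exists a constant K such that μ₄ ≤ K n² for all n > 1 and x ∈ [0,1]. -/

import Mathlib

/-- Generalized rising factorial with increment `h`: `x^(m,h) = x(x+h)···(x+(m-1)h)`. -/
noncomputable def rfac (x h : ℝ) (m : ℕ) : ℝ := ∏ i ∈ Finset.range m, (x + i * h)

/-- Pólya urn probability `p_{n,k}^{a,b,c}`. -/
noncomputable def polyaProb (a b c : ℝ) (n k : ℕ) : ℝ :=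
  (n.choose k : ℝ) * rfac a c k * rfac b c (n - k) / rfac (a + b) c n

/-- The operator `R_n(f;x)` with `c = -min{x,1-x}/(n-1)`. -/
noncomputable def Rop (n : ℕ) (f : ℝ → ℝ) (x : ℝ) : ℝ :=
  ∑ k ∈ Finset.range (n + 1),
    polyaProb x (1 - x) (-(min x (1 - x)) / ((n : ℝ) - 1)) n k * f ((k : ℝ) / n)

/-- Modulus of continuity of `f` on `[a,b]`. -/
noncomputable def modulus (f : ℝ → ℝ) (a b δ : ℝ) : ℝ :=
  sSup {d : ℝ | ∃ u ∈ Set.Icc a b, ∃ v ∈ Set.Icc a b, |u - v| ≤ δ ∧ d = |f u - f v|}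

lemma dF1 (k : ℕ) : (k.descFactorial 1 : ℝ) = k := by simp

lemma rfac_zero (x c : ℝ) : rfac x c 0 = 1 := by simp [rfac]

lemma rfac_succ (x c : ℝ) (m : ℕ) : rfac x c (m+1) = rfac x c m * (x + m * c) := by
  simp [rfac, Finset.prod_range_succ]

lemma rfac_add (x c : ℝ) (m j : ℕ) :
    rfac x c (m + j) = rfac x c m * rfac (x + m * c) c j := by
  rw [rfac, rfac, rfac, Finset.prod_range_add]
  congr 1
  refine Finset.prod_congr rfl fun i _ => ?_
  push_cast
  ring

lemma vander (c : ℝ) (N : ℕ) : ∀ a b : ℝ,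
    ∑ k ∈ Finset.range (N+1), (N.choose k : ℝ) * rfac a c k * rfac b c (N - k)
      = rfac (a+b) c N := by
  induction N with
  | zero => intro a b; simp [rfac]
  | succ N ih =>
    intro a b
    rw [Finset.sum_range_succ']
    have h1 : ∀ i ∈ Finset.range (N+1),
        ((N+1).choose (i+1) : ℝ) * rfac a c (i+1) * rfac b c (N+1-(i+1))
        = (N.choose i : ℝ) * rfac a c i * rfac b c (N-i) * (a + i*c)
          + (N.choose (i+1) : ℝ) * rfac a c (i+1) * rfac b c (N+1-(i+1)) := by
      intro i _
      rw [Nat.choose_succ_succ, rfac_succ]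
      have : (N+1) - (i+1) = N - i := by omega
      rw [this]
      push_cast
      ring
    rw [Finset.sum_congr rfl h1, Finset.sum_add_distrib]
    have h2 : ∑ i ∈ Finset.range (N+1),
          (N.choose (i+1) : ℝ) * rfac a c (i+1) * rfac b c (N+1-(i+1))
          + ((N+1).choose 0 : ℝ) * rfac a c 0 * rfac b c (N+1-0)
        = ∑ k ∈ Finset.range (N+1),
            (N.choose k : ℝ) * rfac a c k * rfac b c (N-k) * (b + (N-k : ℕ) * c) := by
      have e1 : ((N+1).choose 0 : ℝ) * rfac a c 0 * rfac b c (N+1-0)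
          = (N.choose 0 : ℝ) * rfac a c 0 * rfac b c (N+1-0) := by norm_num
      rw [e1]
      rw [← Finset.sum_range_succ' (fun k => (N.choose k : ℝ) * rfac a c k * rfac b c (N+1-k)) (N+1)]
      rw [Finset.sum_range_succ]
      simp only [Nat.choose_succ_self, Nat.cast_zero, zero_mul]
      rw [add_zero]
      refine Finset.sum_congr rfl fun k hk => ?_
      have hkN : k ≤ N := by simpa [Nat.lt_succ_iff] using hk
      have : N + 1 - k = (N - k) + 1 := by omega
      rw [this, rfac_succ]
      ring
    rw [add_assoc, h2, ← Finset.sum_add_distrib]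
    have h3 : ∀ k ∈ Finset.range (N+1),
        (N.choose k : ℝ) * rfac a c k * rfac b c (N-k) * (a + k*c)
          + (N.choose k : ℝ) * rfac a c k * rfac b c (N-k) * (b + (N-k : ℕ) * c)
        = (N.choose k : ℝ) * rfac a c k * rfac b c (N-k) * (a + b + N*c) := by
      intro k hk
      have hkN : k ≤ N := by simpa [Nat.lt_succ_iff] using hk
      have : ((N - k : ℕ) : ℝ) = (N : ℝ) - k := by
        rw [Nat.cast_sub hkN]
      rw [this]
      ring
    rw [Finset.sum_congr rfl h3, ← Finset.sum_mul, ih, rfac_succ]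

lemma nat_id {N r j : ℕ} (h : r + j ≤ N) :
    N.choose (r+j) * (r+j).descFactorial r = N.descFactorial r * (N-r).choose j := by
  have h2 := Nat.choose_mul (n := N) (Nat.le_add_right r j)
  rw [Nat.add_sub_cancel_left] at h2
  calc N.choose (r+j) * ((r+j).descFactorial r)
      = Nat.factorial r * (N.choose (r+j) * (r+j).choose r) := by
        rw [Nat.descFactorial_eq_factorial_mul_choose]; ring
    _ = Nat.factorial r * (N.choose r * (N-r).choose j) := by rw [h2]
    _ = (Nat.factorial r * N.choose r) * (N-r).choose j := by ring
    _ = N.descFactorial r * (N-r).choose j := by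
        rw [Nat.descFactorial_eq_factorial_mul_choose]

lemma fact_moment (a b c : ℝ) {r N : ℕ} (h : r ≤ N) :
    ∑ k ∈ Finset.range (N+1),
        (N.choose k : ℝ) * rfac a c k * rfac b c (N-k) * (k.descFactorial r : ℝ)
      = (N.descFactorial r : ℝ) * rfac a c r * rfac (a+b+r*c) c (N-r) := by
  have hNr : N + 1 = r + (N - r + 1) := by omega
  rw [hNr, Finset.sum_range_add]
  have hz : ∀ i ∈ Finset.range r,
      (N.choose i : ℝ) * rfac a c i * rfac b c (N-i) * (i.descFactorial r : ℝ) = 0 := by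
    intro i hi
    have : i.descFactorial r = 0 := Nat.descFactorial_eq_zero_iff_lt.2 (Finset.mem_range.1 hi)
    rw [this]; simp
  rw [Finset.sum_congr rfl hz, Finset.sum_const, smul_zero, zero_add]
  have hterm : ∀ j ∈ Finset.range (N - r + 1),
      (N.choose (r+j) : ℝ) * rfac a c (r+j) * rfac b c (N-(r+j)) * ((r+j).descFactorial r : ℝ)
      = (N.descFactorial r : ℝ) * rfac a c r *
          (((N-r).choose j : ℝ) * rfac (a + r*c) c j * rfac b c ((N-r) - j)) := by
    intro j hj
    have hjle : r + j ≤ N := by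
      have := Finset.mem_range.1 hj; omega
    have hnat : (N.choose (r+j) : ℝ) * ((r+j).descFactorial r : ℝ)
        = (N.descFactorial r : ℝ) * ((N-r).choose j : ℝ) := by
      rw [← Nat.cast_mul, ← Nat.cast_mul, nat_id hjle]
    have hsub : N - (r+j) = (N - r) - j := by omega
    rw [rfac_add, hsub]
    linear_combination (rfac a c r * rfac (a + (r:ℝ)*c) c j * rfac b c ((N-r) - j)) * hnat
  rw [Finset.sum_congr rfl hterm, ← Finset.mul_sum]
  rw [show N - r + 1 = (N-r) + 1 from rfl, vander c (N-r) (a + r*c) b]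
  ring_nf

lemma dF2 (k : ℕ) : (k.descFactorial 2 : ℝ) = k * ((k:ℝ) - 1) := by
  rcases k with _ | k
  · simp
  · simp [Nat.descFactorial_succ, Nat.descFactorial]; ring

lemma dF3 (k : ℕ) : (k.descFactorial 3 : ℝ) = k * ((k:ℝ) - 1) * ((k:ℝ) - 2) := by
  rcases k with _ | _ | k
  · simp
  · simp [Nat.descFactorial_succ, Nat.descFactorial]
  · simp [Nat.descFactorial_succ, Nat.descFactorial]; ring

lemma dF4 (k : ℕ) : (k.descFactorial 4 : ℝ) = k * ((k:ℝ) - 1) * ((k:ℝ) - 2) * ((k:ℝ) - 3) := by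
  rcases k with _ | _ | _ | k
  · simp
  · simp [Nat.descFactorial_succ, Nat.descFactorial]
  · simp [Nat.descFactorial_succ, Nat.descFactorial]
  · simp [Nat.descFactorial_succ, Nat.descFactorial]; ring

set_option maxHeartbeats 1000000 in
lemma Wbound (n x e : ℝ) (hn : 8 ≤ n) (hx0 : 0 ≤ x) (hx1 : x ≤ 1) (he0 : 0 ≤ e)
    (hex : e * (n-1) ≤ x) (hex' : e * (n-1) ≤ 1 - x) :
    n*(n-1)*(n-2)*(n-3) * (x*(x-e)*(x-2*e)*(x-3*e))
    + (6 - 4*(n*x)) * (n*(n-1)*(n-2)) * (x*(x-e)*(x-2*e)) * (1-3*e)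
    + (7 - 12*(n*x) + 6*(n*x)^2) * (n*(n-1)) * (x*(x-e)) * ((1-2*e)*(1-3*e))
    + ((n*x) - 4*(n*x)^2 + 6*(n*x)^3 - 3*(n*x)^4) * ((1-e)*(1-2*e)*(1-3*e))
    ≤ n^2 * ((1-e)*(1-2*e)*(1-3*e)) := by
  have hn0 : (0:ℝ) ≤ n := by linarith
  have hhalf : e * (n-1) ≤ 1/2 := by linarith
  have he14 : e ≤ 1/14 := by nlinarith
  have hne0 : 0 ≤ n * e := mul_nonneg hn0 he0
  have hne : n * e ≤ 4/7 := by nlinarith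
  have hxx : 0 ≤ x * (1-x) := mul_nonneg hx0 (by linarith)
  have hxx4 : x * (1-x) ≤ 1/4 := by nlinarith [sq_nonneg (x - 1/2)]
  have hq : (0:ℝ) ≤ 1 - 3*x + 3*x^2 := by nlinarith [sq_nonneg (x - 1/2)]
  have h1 : 0 ≤ 3*((n*x)*(1-x))^2 * (n*e) * (2 - n*e) :=
    mul_nonneg (mul_nonneg (by positivity) hne0) (by linarith)
  have h2 : 0 ≤ 6*(n^2*e)^2 * (x*(1-x)) * e * (1 - 3*x + 3*x^2) :=
    mul_nonneg (mul_nonneg (mul_nonneg (by positivity) hxx) he0) hq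
  have hB9 : 0 ≤ n^2*e*(x*(1-x))*(1-3*x+3*x^2) :=
    mul_nonneg (mul_nonneg (by positivity) hxx) hq
  have h9 : -((48:ℝ)/7)*(n^2*e*(x*(1-x))*(1-3*x+3*x^2))
      ≤ -12*n^3*x*e^2*(1-x)*(1-3*x+3*x^2) := by
    nlinarith [mul_nonneg (by linarith : (0:ℝ) ≤ 48/7 - 12*(n*e)) hB9]
  have hstep1 : -(5:ℝ)/4 ≤ (x*(1-x))*(24*x^2-24*x+1) := by
    nlinarith [sq_nonneg (x - 1/2), hxx, hxx4]
  have h45 : -(5:ℝ)/392*n^2 ≤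
      n^2*e*(x*(1-x))*(24*x^2-24*x+7) + n^2*e^2*(x*(1-x))
        - (48:ℝ)/7*(n^2*e*(x*(1-x))*(1-3*x+3*x^2)) := by
    have e1 : n^2*e*(x*(1-x))*(24*x^2-24*x+7)
        - (48:ℝ)/7*(n^2*e*(x*(1-x))*(1-3*x+3*x^2))
        = (1/7) * (n^2*e) * ((x*(1-x))*(24*x^2-24*x+1)) := by ring
    have e2 : 0 ≤ n^2*e^2*(x*(1-x)) := by positivity
    have e3 : (1/7) * (n^2*e) * ((x*(1-x))*(24*x^2-24*x+1)) ≥ (1/7)*(n^2*e)*(-(5:ℝ)/4) := by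
      have : 0 ≤ (1/7)*(n^2*e) := by positivity
      nlinarith [mul_le_mul_of_nonneg_left hstep1 this]
    have e4 : (1/7)*(n^2*e)*(-(5:ℝ)/4) ≥ -(5:ℝ)/392*n^2 := by nlinarith [sq_nonneg n]
    linarith [e1, e2, e3, e4]
  have hD4 : (1:ℝ)/2 * n^2 ≤ n^2 * ((1-e)*(1-2*e)*(1-3*e)) := by
    nlinarith [sq_nonneg n, sq_nonneg (n*e), mul_nonneg (mul_nonneg hne0 hne0) hne0,
      mul_nonneg (sq_nonneg n) he0]
  have h6 : -(3:ℝ)/16*n^2 ≤ -3*(n*(x*(1-x)))^2 := by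
    nlinarith [mul_le_mul_of_nonneg_left hxx4 (mul_nonneg (sq_nonneg n) hxx :
      (0:ℝ) ≤ n^2 * (x*(1-x)))]
  have h7 : -(1:ℝ)/4*n ≤ -(n*(x*(1-x))*(1-6*x+6*x^2)) := by
    have : x*(1-x)*(1-6*x+6*x^2) ≤ 1/4 := by nlinarith [sq_nonneg (x-1/2), hxx, hxx4]
    nlinarith [mul_le_mul_of_nonneg_left this hn0]
  have h8 : -(1:ℝ)/56*n ≤ -(n*x*e*(1-x)) := by
    have : x*e*(1-x) ≤ 1/56 := by nlinarith [mul_le_mul_of_nonneg_left hxx4 he0]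
    nlinarith [mul_le_mul_of_nonneg_left this hn0]
  have hbig : 0 ≤ ((1:ℝ)/2 - 3/16 - 5/392)*n^2 - ((1:ℝ)/4 + 1/56)*n := by nlinarith
  linarith [h1, h2, h9, h45, hD4, h6, h7, h8, hbig]

set_option maxHeartbeats 2000000 in
theorem polya_mu4_bound :
    ∃ K : ℝ, ∀ n : ℕ, 1 < n → ∀ x ∈ Set.Icc (0 : ℝ) 1,
      ∑ k ∈ Finset.range (n + 1),
          polyaProb x (1 - x) (-(min x (1 - x)) / ((n : ℝ) - 1)) n k *
            ((k : ℝ) - n * x) ^ 4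
        ≤ K * (n : ℝ) ^ 2 := by
  refine ⟨64, fun n hn x hx => ?_⟩
  obtain ⟨hx0, hx1⟩ := hx
  set c : ℝ := -(min x (1 - x)) / ((n : ℝ) - 1) with hcdef
  set e : ℝ := (min x (1 - x)) / ((n : ℝ) - 1) with hedef
  have hn2 : (2:ℝ) ≤ (n:ℝ) := by exact_mod_cast hn
  have hd0 : (0:ℝ) < (n:ℝ) - 1 := by linarith
  have hc : c = -e := by rw [hcdef, hedef, neg_div]
  have hM0 : 0 ≤ min x (1-x) := le_min hx0 (by linarith)
  have hMx : min x (1-x) ≤ x := min_le_left _ _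
  have hM1x : min x (1-x) ≤ 1 - x := min_le_right _ _
  have hM12 : min x (1-x) ≤ 1/2 := by
    rcases le_total x (1-x) with h | h
    · rw [min_eq_left h]; linarith
    · rw [min_eq_right h]; linarith
  have he0 : 0 ≤ e := div_nonneg hM0 hd0.le
  have heM : e * ((n:ℝ)-1) = min x (1-x) := div_mul_cancel₀ _ hd0.ne'
  -- basic factor bounds
  have hie : ∀ i : ℕ, i < n → (i:ℝ) * e ≤ min x (1-x) := by
    intro i hi
    have h1 : (i:ℝ) ≤ (n:ℝ) - 1 := by
      have : (i:ℝ) + 1 ≤ (n:ℝ) := by exact_mod_cast hi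
      linarith
    calc (i:ℝ) * e ≤ ((n:ℝ)-1) * e := mul_le_mul_of_nonneg_right h1 he0
      _ = min x (1-x) := by rw [mul_comm]; exact heM
  have h1f : ∀ i : ℕ, i < n → (1:ℝ)/2 ≤ 1 + (i:ℝ) * c := by
    intro i hi
    have := hie i hi
    rw [hc]; nlinarith
  have hxf : ∀ i : ℕ, i < n → 0 ≤ x + (i:ℝ) * c := by
    intro i hi
    have := hie i hi
    rw [hc]; nlinarith
  have hyf : ∀ i : ℕ, i < n → 0 ≤ (1-x) + (i:ℝ) * c := by
    intro i hi
    have := hie i hi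
    rw [hc]; nlinarith
  have hDn : 0 < rfac 1 c n := by
    refine Finset.prod_pos fun i hi => ?_
    have := h1f i (Finset.mem_range.1 hi)
    linarith
  -- rewrite to common-denominator form
  have hPform : ∀ k ∈ Finset.range (n+1), polyaProb x (1-x) c n k * ((k:ℝ) - n*x)^4
      = ((n.choose k : ℝ) * rfac x c k * rfac (1-x) c (n-k) * ((k:ℝ) - n*x)^4)
          / rfac 1 c n := by
    intro k _
    rw [polyaProb, show x + (1-x) = (1:ℝ) by ring]
    ring
  rw [Finset.sum_congr rfl hPform, ← Finset.sum_div, div_le_iff₀ hDn]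
  rcases lt_or_ge n 8 with hsmall | hbig
  · -- crude bound for n ≤ 7
    have hterm : ∀ k ∈ Finset.range (n+1),
        (n.choose k : ℝ) * rfac x c k * rfac (1-x) c (n-k) * ((k:ℝ) - n*x)^4
        ≤ (n.choose k : ℝ) * rfac x c k * rfac (1-x) c (n-k) * (n:ℝ)^4 := by
      intro k hk
      have hk' : k ≤ n := by have := Finset.mem_range.1 hk; omega
      have ht0 : 0 ≤ (n.choose k : ℝ) * rfac x c k * rfac (1-x) c (n-k) := by
        have hA : 0 ≤ rfac x c k := Finset.prod_nonneg fun i hi => by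
          have : i < n := by have := Finset.mem_range.1 hi; omega
          exact hxf i this
        have hB : 0 ≤ rfac (1-x) c (n-k) := Finset.prod_nonneg fun i hi => by
          have : i < n := by have := Finset.mem_range.1 hi; omega
          exact hyf i this
        positivity
      have hk4 : ((k:ℝ) - n*x)^4 ≤ (n:ℝ)^4 := by
        have hkn : (k:ℝ) ≤ (n:ℝ) := by exact_mod_cast hk'
        have hk0 : (0:ℝ) ≤ (k:ℝ) := Nat.cast_nonneg k
        have hnx0 : 0 ≤ (n:ℝ)*x := by positivity
        have hnx1 : (n:ℝ)*x ≤ (n:ℝ) := by nlinarith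
        have hsq : ((k:ℝ) - n*x)^2 ≤ (n:ℝ)^2 := by nlinarith
        nlinarith [sq_nonneg ((k:ℝ) - n*x)]
      exact mul_le_mul_of_nonneg_left hk4 ht0
    calc ∑ k ∈ Finset.range (n+1),
            (n.choose k : ℝ) * rfac x c k * rfac (1-x) c (n-k) * ((k:ℝ) - n*x)^4
        ≤ ∑ k ∈ Finset.range (n+1),
            (n.choose k : ℝ) * rfac x c k * rfac (1-x) c (n-k) * (n:ℝ)^4 :=
          Finset.sum_le_sum hterm
      _ = rfac 1 c n * (n:ℝ)^4 := by
          rw [← Finset.sum_mul, vander c n x (1-x), show x + (1-x) = (1:ℝ) by ring]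
      _ ≤ 64 * (n:ℝ)^2 * rfac 1 c n := by
          have hn8 : (n:ℝ) ≤ 8 := by exact_mod_cast hsmall.le
          have h64 : (n:ℝ)^2 ≤ 64 := by nlinarith
          nlinarith [mul_nonneg (mul_nonneg hDn.le (sq_nonneg (n:ℝ)))
            (by linarith : (0:ℝ) ≤ 64 - (n:ℝ)^2)]
  · -- main case n ≥ 8
    have h4n : 4 ≤ n := by omega
    have hn8 : (8:ℝ) ≤ (n:ℝ) := by exact_mod_cast hbig
    have hsplit : ∀ k ∈ Finset.range (n+1),
        (n.choose k : ℝ) * rfac x c k * rfac (1-x) c (n-k) * ((k:ℝ) - n*x)^4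
        = (n.choose k : ℝ) * rfac x c k * rfac (1-x) c (n-k) * (k.descFactorial 4 : ℝ)
          + (6 - 4*((n:ℝ)*x)) * ((n.choose k : ℝ) * rfac x c k * rfac (1-x) c (n-k) * (k.descFactorial 3 : ℝ))
          + (7 - 12*((n:ℝ)*x) + 6*((n:ℝ)*x)^2) * ((n.choose k : ℝ) * rfac x c k * rfac (1-x) c (n-k) * (k.descFactorial 2 : ℝ))
          + (1 - 4*((n:ℝ)*x) + 6*((n:ℝ)*x)^2 - 4*((n:ℝ)*x)^3) * ((n.choose k : ℝ) * rfac x c k * rfac (1-x) c (n-k) * (k.descFactorial 1 : ℝ))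
          + ((n:ℝ)*x)^4 * ((n.choose k : ℝ) * rfac x c k * rfac (1-x) c (n-k)) := by
      intro k _
      rw [dF4, dF3, dF2, dF1]
      ring
    rw [Finset.sum_congr rfl hsplit, Finset.sum_add_distrib, Finset.sum_add_distrib,
      Finset.sum_add_distrib, Finset.sum_add_distrib, ← Finset.mul_sum, ← Finset.mul_sum,
      ← Finset.mul_sum, ← Finset.mul_sum,
      fact_moment x (1-x) c (show 4 ≤ n from h4n),
      fact_moment x (1-x) c (show 3 ≤ n by omega),
      fact_moment x (1-x) c (show 2 ≤ n by omega),
      fact_moment x (1-x) c (show 1 ≤ n by omega),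
      vander c n x (1-x), show x + (1-x) = (1:ℝ) by ring]
    -- split equations
    have hs : ∀ r : ℕ, r ≤ n → rfac 1 c n = rfac 1 c r * rfac (1 + (r:ℝ) * c) c (n-r) := by
      intro r hr
      have h := rfac_add 1 c r (n-r)
      rw [show r + (n - r) = n by omega] at h
      exact h
    have hD1 : rfac 1 c 1 = 1 := by norm_num [rfac, Finset.prod_range_succ]
    have hD2 : rfac 1 c 2 = 1 + c := by norm_num [rfac, Finset.prod_range_succ]
    have hD3 : rfac 1 c 3 = (1+c)*(1+2*c) := by norm_num [rfac, Finset.prod_range_succ]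
    have hD4v : rfac 1 c 4 = (1+c)*(1+2*c)*(1+3*c) := by
      norm_num [rfac, Finset.prod_range_succ]
    have hA1 : rfac x c 1 = x := by norm_num [rfac, Finset.prod_range_succ]
    have hA2 : rfac x c 2 = x*(x+c) := by norm_num [rfac, Finset.prod_range_succ]
    have hA3 : rfac x c 3 = x*(x+c)*(x+2*c) := by norm_num [rfac, Finset.prod_range_succ]
    have hA4 : rfac x c 4 = x*(x+c)*(x+2*c)*(x+3*c) := by
      norm_num [rfac, Finset.prod_range_succ]
    have hQ4 : rfac (1 + ((4:ℕ):ℝ) * c) c (n-4) * ((1+c)*(1+2*c)*(1+3*c)) = rfac 1 c n := by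
      rw [hs 4 (by omega), hD4v]; ring
    have hQ3 : rfac (1 + ((3:ℕ):ℝ) * c) c (n-3) * ((1+c)*(1+2*c)*(1+3*c))
        = (1+3*c) * rfac 1 c n := by
      rw [hs 3 (by omega), hD3]; ring
    have hQ2 : rfac (1 + ((2:ℕ):ℝ) * c) c (n-2) * ((1+c)*(1+2*c)*(1+3*c))
        = (1+2*c)*(1+3*c) * rfac 1 c n := by
      rw [hs 2 (by omega), hD2]; ring
    have hQ1 : rfac (1 + ((1:ℕ):ℝ) * c) c (n-1) = rfac 1 c n := by
      rw [hs 1 (by omega), hD1, one_mul]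
    have hW := Wbound (n:ℝ) x e hn8 hx0 hx1 he0
      (by rw [heM]; exact hMx) (by rw [heM]; exact hM1x)
    have he14 : e ≤ 1/14 := by nlinarith
    have hP4pos : (0:ℝ) < (1-e)*(1-2*e)*(1-3*e) := by
      apply mul_pos (mul_pos _ _) <;> linarith
    rw [dF4 n, dF3 n, dF2 n, dF1 n, hA4, hA3, hA2, hA1, hc] at *
    refine le_of_mul_le_mul_right ?_ hP4pos
    have hGD : (↑n * (↑n - 1) * (↑n - 2) * (↑n - 3) * (x * (x + -e) * (x + 2 * -e) * (x + 3 * -e)) * rfac (1 + ((4:ℕ):ℝ) * -e) (-e) (n - 4) +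
            (6 - 4 * (↑n * x)) *
              (↑n * (↑n - 1) * (↑n - 2) * (x * (x + -e) * (x + 2 * -e)) * rfac (1 + ((3:ℕ):ℝ) * -e) (-e) (n - 3)) +
          (7 - 12 * (↑n * x) + 6 * (↑n * x) ^ 2) * (↑n * (↑n - 1) * (x * (x + -e)) * rfac (1 + ((2:ℕ):ℝ) * -e) (-e) (n - 2)) +
        (1 - 4 * (↑n * x) + 6 * (↑n * x) ^ 2 - 4 * (↑n * x) ^ 3) * (↑n * x * rfac (1 + ((1:ℕ):ℝ) * -e) (-e) (n - 1)) +
      (↑n * x) ^ 4 * rfac 1 (-e) n) * ((1 - e) * (1 - 2 * e) * (1 - 3 * e))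
      = (↑n * (↑n - 1) * (↑n - 2) * (↑n - 3) * (x * (x - e) * (x - 2 * e) * (x - 3 * e)) +
          (6 - 4 * (↑n * x)) * (↑n * (↑n - 1) * (↑n - 2)) * (x * (x - e) * (x - 2 * e)) * (1 - 3 * e) +
        (7 - 12 * (↑n * x) + 6 * (↑n * x) ^ 2) * (↑n * (↑n - 1)) * (x * (x - e)) * ((1 - 2 * e) * (1 - 3 * e)) +
      (↑n * x - 4 * (↑n * x) ^ 2 + 6 * (↑n * x) ^ 3 - 3 * (↑n * x) ^ 4) * ((1 - e) * (1 - 2 * e) * (1 - 3 * e))) * rfac 1 (-e) n := by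
      linear_combination
        (↑n * (↑n - 1) * (↑n - 2) * (↑n - 3) * (x * (x + -e) * (x + 2 * -e) * (x + 3 * -e))) * hQ4
        + ((6 - 4 * (↑n * x)) * (↑n * (↑n - 1) * (↑n - 2) * (x * (x + -e) * (x + 2 * -e)))) * hQ3
        + ((7 - 12 * (↑n * x) + 6 * (↑n * x) ^ 2) * (↑n * (↑n - 1) * (x * (x + -e)))) * hQ2
        + ((1 - 4 * (↑n * x) + 6 * (↑n * x) ^ 2 - 4 * (↑n * x) ^ 3) * (↑n * x) * ((1 - e) * (1 - 2 * e) * (1 - 3 * e))) * hQ1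
    have h2 := mul_le_mul_of_nonneg_right hW hDn.le
    have h3 : (0:ℝ) ≤ 63 * (n:ℝ)^2 * (rfac 1 (-e) n) * ((1-e)*(1-2*e)*(1-3*e)) :=
      mul_nonneg (mul_nonneg (by positivity) hDn.le) hP4pos.le
    linarith [hGD, h2, h3]
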